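/- (Proposition, facility location to DP-means) Let X ⊆ ℝ^d be a finite nonempty set and λ > 0. Then min over all DP-Facility solutions (I, φ) of [Σ_{x∈X} ‖x − φ(x)‖² + λ·|I|] ≤ 2 · min over all partitions S of X and centers c of DP(X, λ, S, c). In particular, the clustering induced by an optimal DP-Facility solution, with its opened facilities as centers, has DP-means cost at most twice the optimal DP-means cost. -/

import Mathlib

open Finset
open scoped Classical

/-- The DP-means cost of a partition `S` with centers `c` and penalty `lam`. -/
noncomputable def dpMeansCost {d : ℕ} (lam : ℝ)
    (S : Finset (Finset (EuclideanSpace ℝ (Fin d))))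
    (c : Finset (EuclideanSpace ℝ (Fin d)) → EuclideanSpace ℝ (Fin d)) : ℝ :=
  (∑ A ∈ S, ∑ x ∈ A, ‖x - c A‖ ^ 2) + lam * S.card

lemma key_lemma {d : ℕ} (A : Finset (EuclideanSpace ℝ (Fin d))) (hA : A.Nonempty)
    (c : EuclideanSpace ℝ (Fin d)) :
    ∃ f ∈ A, ∑ x ∈ A, ‖x - f‖ ^ 2 ≤ 2 * ∑ x ∈ A, ‖x - c‖ ^ 2 := by
  obtain ⟨f, hfA, hmin⟩ := A.exists_min_image (fun y => ∑ x ∈ A, ‖x - y‖ ^ 2) hA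
  refine ⟨f, hfA, ?_⟩
  have hcard : (0:ℝ) < A.card := by exact_mod_cast card_pos.mpr hA
  have hxy : ∀ x y : EuclideanSpace ℝ (Fin d),
      ‖x - y‖ ^ 2 = ‖x - c‖ ^ 2 + ‖y - c‖ ^ 2 - 2 * (inner ℝ (x - c) (y - c) : ℝ) := by
    intro x y
    have h : x - y = (x - c) - (y - c) := by abel
    rw [h, norm_sub_sq_real]; ring
  have hs : ∑ y ∈ A, ∑ x ∈ A, (inner ℝ (x - c) (y - c) : ℝ)
      = (inner ℝ (∑ x ∈ A, (x - c)) (∑ y ∈ A, (y - c)) : ℝ) := by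
    rw [inner_sum]
    exact Finset.sum_congr rfl fun y _ => (sum_inner _ _ _).symm
  have hnn : (0:ℝ) ≤ (inner ℝ (∑ x ∈ A, (x - c)) (∑ y ∈ A, (y - c)) : ℝ) := real_inner_self_nonneg
  have h2 : ∑ y ∈ A, ∑ x ∈ A, ‖x - y‖ ^ 2
      ≤ (A.card : ℝ) * (2 * ∑ x ∈ A, ‖x - c‖ ^ 2) := by
    have e1 : ∀ y : EuclideanSpace ℝ (Fin d), ∑ x ∈ A, ‖x - y‖ ^ 2
        = (∑ x ∈ A, ‖x - c‖ ^ 2) + (A.card : ℝ) * ‖y - c‖ ^ 2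
          - 2 * (inner ℝ (∑ x ∈ A, (x - c)) (y - c) : ℝ) := by
      intro y
      rw [Finset.sum_congr rfl fun x _ => hxy x y, Finset.sum_sub_distrib,
        Finset.sum_add_distrib, Finset.sum_const, nsmul_eq_mul, ← Finset.mul_sum,
        ← sum_inner]
    have expand : ∑ y ∈ A, ∑ x ∈ A, ‖x - y‖ ^ 2
        = (A.card : ℝ) * (∑ x ∈ A, ‖x - c‖ ^ 2) + (A.card : ℝ) * (∑ y ∈ A, ‖y - c‖ ^ 2)
          - 2 * (inner ℝ (∑ x ∈ A, (x - c)) (∑ y ∈ A, (y - c)) : ℝ) := by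
      rw [Finset.sum_congr rfl fun y _ => e1 y, Finset.sum_sub_distrib,
        Finset.sum_add_distrib, Finset.sum_const, nsmul_eq_mul, ← Finset.mul_sum,
        ← Finset.mul_sum, ← inner_sum]
    rw [expand]; nlinarith
  have h1 : (A.card : ℝ) * ∑ x ∈ A, ‖x - f‖ ^ 2 ≤ ∑ y ∈ A, ∑ x ∈ A, ‖x - y‖ ^ 2 := by
    calc (A.card : ℝ) * ∑ x ∈ A, ‖x - f‖ ^ 2
        = ∑ _y ∈ A, ∑ x ∈ A, ‖x - f‖ ^ 2 := by rw [Finset.sum_const, nsmul_eq_mul]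
      _ ≤ ∑ y ∈ A, ∑ x ∈ A, ‖x - y‖ ^ 2 := Finset.sum_le_sum fun y hy => hmin y hy
  have := h1.trans h2
  exact le_of_mul_le_mul_left this hcard

/-- The optimal DP-Facility cost is at most twice the optimal
DP-means cost: for every partition of `X` with arbitrary centers, there is a
DP-Facility solution of at most twice its DP-means cost. -/
theorem dp_facility_le_two_mul_dp_means {d : ℕ}
    (X : Finset (EuclideanSpace ℝ (Fin d))) (hX : X.Nonempty)
    (lam : ℝ) (hlam : 0 < lam) :
    ∀ (S : Finset (Finset (EuclideanSpace ℝ (Fin d))))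
      (c : Finset (EuclideanSpace ℝ (Fin d)) → EuclideanSpace ℝ (Fin d)),
      (∀ A ∈ S, A.Nonempty) →
      (∀ A ∈ S, ∀ B ∈ S, A ≠ B → Disjoint A B) →
      S.sup id = X →
      ∃ (I : Finset (EuclideanSpace ℝ (Fin d)))
        (φ : EuclideanSpace ℝ (Fin d) → EuclideanSpace ℝ (Fin d)),
        I ⊆ X ∧ I.Nonempty ∧ (∀ x ∈ X, φ x ∈ I) ∧
        (∑ x ∈ X, ‖x - φ x‖ ^ 2) + lam * I.card ≤ 2 * dpMeansCost lam S c := by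
  intro S c hne hdisj hcover
  unfold dpMeansCost
  -- choose a facility in each cluster
  have key' : ∀ A : Finset (EuclideanSpace ℝ (Fin d)), ∃ f,
      A.Nonempty → f ∈ A ∧ ∑ x ∈ A, ‖x - f‖ ^ 2 ≤ 2 * ∑ x ∈ A, ‖x - c A‖ ^ 2 := by
    intro A
    by_cases h : A.Nonempty
    · obtain ⟨f, hf1, hf2⟩ := key_lemma A h (c A)
      exact ⟨f, fun _ => ⟨hf1, hf2⟩⟩
    · exact ⟨0, fun h' => absurd h' h⟩
  choose F hF using key'
  have hSne : S.Nonempty := by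
    by_contra h
    rw [not_nonempty_iff_eq_empty] at h
    rw [h] at hcover
    simp at hcover
    exact hX.ne_empty hcover.symm
  have hsub : ∀ A ∈ S, A ⊆ X := by
    intro A hA
    rw [← hcover]
    exact le_sup (f := id) hA
  -- the assignment
  set φ : EuclideanSpace ℝ (Fin d) → EuclideanSpace ℝ (Fin d) :=
    fun x => if h : ∃ A ∈ S, x ∈ A then F h.choose else 0 with hφ
  have hmemX : ∀ x ∈ X, ∃ A ∈ S, x ∈ A := by
    intro x hx
    rw [← hcover] at hx
    simpa using Finset.mem_sup.mp hx
  have hφeq : ∀ A ∈ S, ∀ x ∈ A, φ x = F A := by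
    intro A hA x hx
    have h : ∃ B ∈ S, x ∈ B := ⟨A, hA, hx⟩
    have h1 : h.choose ∈ S := h.choose_spec.1
    have h2 : x ∈ h.choose := h.choose_spec.2
    have : h.choose = A := by
      by_contra hne'
      exact (Finset.disjoint_left.mp (hdisj _ h1 _ hA hne') h2) hx
    simp only [hφ, dif_pos h, this]
  refine ⟨S.image F, φ, ?_, ?_, ?_, ?_⟩
  · intro y hy
    obtain ⟨A, hA, rfl⟩ := Finset.mem_image.mp hy
    exact hsub A hA ((hF A (hne A hA)).1)
  · exact hSne.image F
  · intro x hx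
    obtain ⟨A, hA, hxA⟩ := hmemX x hx
    rw [hφeq A hA x hxA]
    exact Finset.mem_image_of_mem F hA
  · have hPD : (↑S : Set (Finset (EuclideanSpace ℝ (Fin d)))).PairwiseDisjoint id :=
      fun A hA B hB hAB => hdisj A hA B hB hAB
    have hsplit : ∑ x ∈ X, ‖x - φ x‖ ^ 2 = ∑ A ∈ S, ∑ x ∈ A, ‖x - φ x‖ ^ 2 := by
      rw [← hcover, Finset.sup_eq_biUnion, Finset.sum_biUnion hPD]
      rfl
    have hsum : ∑ x ∈ X, ‖x - φ x‖ ^ 2 ≤ 2 * ∑ A ∈ S, ∑ x ∈ A, ‖x - c A‖ ^ 2 := by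
      rw [hsplit, Finset.mul_sum]
      refine Finset.sum_le_sum fun A hA => ?_
      calc ∑ x ∈ A, ‖x - φ x‖ ^ 2 = ∑ x ∈ A, ‖x - F A‖ ^ 2 :=
            Finset.sum_congr rfl fun x hx => by rw [hφeq A hA x hx]
        _ ≤ 2 * ∑ x ∈ A, ‖x - c A‖ ^ 2 := (hF A (hne A hA)).2
    have hcard : ((S.image F).card : ℝ) ≤ (S.card : ℝ) := by
      exact_mod_cast Finset.card_image_le
    have hc0 : (0:ℝ) ≤ (S.card : ℝ) := Nat.cast_nonneg _
    nlinarith [hsum, hcard, hc0, hlam]
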